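/- arXiv:2506.23758 — 3 statements merged into one kernel-verified Lean document; each statement's English description precedes it below -/
import Mathlib

section
/- Let f : ℝ^d → ℝ be L-smooth and f_β its ball smoothing with parameter β > 0. Then for every x ∈ ℝ^d, ‖∇f_β(x) − ∇f(x)‖² ≤ (L² d² / 4) β². -/
open MeasureTheory

/-- Uniform-ball smoothing: `f_β(x) = E_{u ~ U(B^d)}[f(x + β u)]`. -/
noncomputable def ballSmooth {d : ℕ} (f : EuclideanSpace ℝ (Fin d) → ℝ) (β : ℝ)
    (x : EuclideanSpace ℝ (Fin d)) : ℝ :=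
  ⨍ u in Metric.closedBall (0 : EuclideanSpace ℝ (Fin d)) 1, f (x + β • u)

section aux
open Metric Set InnerProductSpace

private lemma radial_int (d : ℕ) (hd : 0 < d) :
    ∫ u in closedBall (0 : EuclideanSpace ℝ (Fin d)) 1, ‖u‖ ∂volume
      = (d : ℝ) * (volume (ball (0 : EuclideanSpace ℝ (Fin d)) 1)).toReal * (1 / (d + 1)) := by
  have : Nontrivial (EuclideanSpace ℝ (Fin d)) := by
    have : Nonempty (Fin d) := ⟨⟨0, hd⟩⟩
    infer_instance
  have hdim : Module.finrank ℝ (EuclideanSpace ℝ (Fin d)) = d := finrank_euclideanSpace_fin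
  have key := MeasureTheory.integral_fun_norm_addHaar
    (volume : Measure (EuclideanSpace ℝ (Fin d))) (Set.indicator (Icc (0:ℝ) 1) id)
  rw [hdim] at key
  have lhs_eq : (∫ x : EuclideanSpace ℝ (Fin d), Set.indicator (Icc (0:ℝ) 1) id ‖x‖)
      = ∫ u in closedBall (0 : EuclideanSpace ℝ (Fin d)) 1, ‖u‖ ∂volume := by
    rw [← integral_indicator (measurableSet_closedBall)]
    congr 1
    ext u
    by_cases h : ‖u‖ ≤ 1
    · rw [Set.indicator_of_mem (by simp [h, norm_nonneg]), Set.indicator_of_mem (by simpa using h)]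
      rfl
    · rw [Set.indicator_of_notMem (by simp [h]), Set.indicator_of_notMem (by simpa using h)]
  have rhs_eq : (∫ y in Set.Ioi (0:ℝ), y ^ (d - 1) • Set.indicator (Icc (0:ℝ) 1) id y)
      = 1 / (d + 1) := by
    have : ∀ y ∈ Set.Ioi (0:ℝ), y ^ (d-1) • Set.indicator (Icc (0:ℝ) 1) id y
        = Set.indicator (Icc (0:ℝ) 1) (fun y => y ^ d) y := by
      intro y hy
      by_cases h : y ∈ Icc (0:ℝ) 1
      · rw [Set.indicator_of_mem h, Set.indicator_of_mem h]
        simp only [id, smul_eq_mul]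
        rw [← pow_succ, Nat.sub_add_cancel hd]
      · rw [Set.indicator_of_notMem h, Set.indicator_of_notMem h, smul_zero]
    rw [setIntegral_congr_fun measurableSet_Ioi this,
      setIntegral_indicator measurableSet_Icc]
    have : Set.Ioi (0:ℝ) ∩ Icc (0:ℝ) 1 = Set.Ioc (0:ℝ) 1 := by
      ext y; simp only [Set.mem_inter_iff, Set.mem_Ioi, Set.mem_Icc, Set.mem_Ioc]; constructor <;> intro h <;> [skip; skip] <;> first | exact ⟨h.1, h.2.2⟩ | exact ⟨h.1, le_of_lt h.1, h.2⟩
    rw [this, ← intervalIntegral.integral_of_le (by norm_num : (0:ℝ) ≤ 1)]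
    rw [integral_pow]
    norm_num
  rw [lhs_eq, rhs_eq] at key
  rw [key, measureReal_def]
  push_cast
  ring_nf

private lemma deriv_under (d : ℕ) (f : EuclideanSpace ℝ (Fin d) → ℝ) (L β : ℝ)
    (hβ : 0 < β) (hdiff : Differentiable ℝ f) (hL0 : 0 ≤ L)
    (hL : ∀ x y, ‖gradient f x - gradient f y‖ ≤ L * ‖x - y‖)
    (x : EuclideanSpace ℝ (Fin d)) :
    HasFDerivAt (fun y => ∫ u in closedBall (0 : EuclideanSpace ℝ (Fin d)) 1, f (y + β • u))
      (∫ u in closedBall (0 : EuclideanSpace ℝ (Fin d)) 1, fderiv ℝ f (x + β • u)) x := by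
  set B := closedBall (0 : EuclideanSpace ℝ (Fin d)) 1 with hB
  set μ := volume.restrict B with hμ
  have : IsFiniteMeasure μ := by
    constructor
    rw [hμ, Measure.restrict_apply_univ]
    exact measure_closedBall_lt_top
  have hgrad_cont : Continuous (gradient f) := by
    refine LipschitzWith.continuous (K := Real.toNNReal L) ?_
    refine LipschitzWith.of_dist_le_mul fun a b => ?_
    rw [dist_eq_norm, dist_eq_norm, Real.coe_toNNReal L hL0]
    exact hL a b
  have hfd : ∀ y, fderiv ℝ f y = (toDual ℝ (EuclideanSpace ℝ (Fin d))) (gradient f y) := fun y =>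
    ((toDual ℝ (EuclideanSpace ℝ (Fin d))).apply_symm_apply (fderiv ℝ f y)).symm
  have hfd_cont : Continuous (fun y => fderiv ℝ f y) := by
    simp only [hfd]
    exact (toDual ℝ (EuclideanSpace ℝ (Fin d))).continuous.comp hgrad_cont
  have hf_cont : Continuous f := hdiff.continuous
  have hnormbd : ∀ y : EuclideanSpace ℝ (Fin d), ‖fderiv ℝ f y‖ = ‖gradient f y‖ := by
    intro y; rw [hfd]; exact (toDual ℝ (EuclideanSpace ℝ (Fin d))).norm_map _
  refine hasFDerivAt_integral_of_dominated_of_fderiv_le (𝕜 := ℝ) (μ := μ)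
    (F := fun y u => f (y + β • u)) (F' := fun y u => fderiv ℝ f (y + β • u))
    (s := ball x 1) (bound := fun _ => ‖gradient f x‖ + L * (1 + β)) (ball_mem_nhds x one_pos) ?_ ?_ ?_ ?_ ?_ ?_
  · filter_upwards with y
    exact ((hf_cont.comp (continuous_const.add (continuous_id.const_smul β))).aestronglyMeasurable)
  · exact ((hf_cont.comp (continuous_const.add (continuous_id.const_smul β))).continuousOn.integrableOn_compact (isCompact_closedBall _ _))
  · exact ((hfd_cont.comp (continuous_const.add (continuous_id.const_smul β))).aestronglyMeasurable)
  · filter_upwards [ae_restrict_mem (measurableSet_closedBall)] with u hu y hy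
    have hu1 : ‖u‖ ≤ 1 := mem_closedBall_zero_iff.mp hu
    rw [hnormbd]
    calc ‖gradient f (y + β • u)‖
        ≤ ‖gradient f x‖ + ‖gradient f (y + β • u) - gradient f x‖ := by
          rw [add_comm]; exact norm_le_norm_add_norm_sub' _ _
      _ ≤ ‖gradient f x‖ + L * ‖y + β • u - x‖ := by
          gcongr; exact hL _ _
      _ ≤ ‖gradient f x‖ + L * (1 + β) := by
          gcongr
          calc ‖y + β • u - x‖ = ‖(y - x) + β • u‖ := by rw [add_sub_right_comm]
            _ ≤ ‖y - x‖ + ‖β • u‖ := norm_add_le _ _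
            _ ≤ 1 + β := by
                rw [norm_smul, Real.norm_eq_abs, abs_of_pos hβ]
                have h1 : ‖y - x‖ ≤ 1 := le_of_lt (mem_ball_iff_norm.mp hy)
                have h2 : β * ‖u‖ ≤ β * 1 := by gcongr
                linarith
  · exact integrable_const _
  · filter_upwards with u y hy
    have : HasFDerivAt (fun z : EuclideanSpace ℝ (Fin d) => z + β • u) (ContinuousLinearMap.id ℝ (EuclideanSpace ℝ (Fin d))) y :=
      (hasFDerivAt_id y).add_const _
    simpa [Function.comp_def] using ((hdiff (y + β • u)).hasFDerivAt.comp y this)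

end aux

theorem gradient_ballSmooth_dist (d : ℕ) (f : EuclideanSpace ℝ (Fin d) → ℝ) (L β : ℝ)
    (hβ : 0 < β) (hdiff : Differentiable ℝ f)
    (hL : ∀ x y, ‖gradient f x - gradient f y‖ ≤ L * ‖x - y‖)
    (x : EuclideanSpace ℝ (Fin d)) :
    ‖gradient (ballSmooth f β) x - gradient f x‖ ^ 2 ≤ L ^ 2 * d ^ 2 / 4 * β ^ 2 := by
  classical
  open Metric Set InnerProductSpace in
  rcases Nat.eq_zero_or_pos d with hd | hd
  · subst hd
    rw [Subsingleton.elim (gradient (ballSmooth f β) x - gradient f x) 0, norm_zero]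
    norm_num
  · have hnt : Nontrivial (EuclideanSpace ℝ (Fin d)) := by
      have : Nonempty (Fin d) := ⟨⟨0, hd⟩⟩
      infer_instance
    have hd1 : (1 : ℝ) ≤ d := by exact_mod_cast hd
    have hL0 : 0 ≤ L := by
      have h := hL (EuclideanSpace.single (⟨0, hd⟩ : Fin d) (1:ℝ)) 0
      have hn : ‖(EuclideanSpace.single (⟨0, hd⟩ : Fin d) (1:ℝ)) - 0‖ = 1 := by
        simp [EuclideanSpace.norm_single]
      rw [hn, mul_one] at h
      exact le_trans (norm_nonneg _) h
    have hvol_pos : 0 < volume (closedBall (0 : EuclideanSpace ℝ (Fin d)) 1) :=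
      lt_of_lt_of_le (measure_ball_pos volume 0 one_pos) (measure_mono ball_subset_closedBall)
    have hvol_ne_top : volume (closedBall (0 : EuclideanSpace ℝ (Fin d)) 1) ≠ ⊤ :=
      measure_closedBall_lt_top.ne
    set V := (volume (closedBall (0 : EuclideanSpace ℝ (Fin d)) 1)).toReal with hV
    have hVpos : 0 < V := ENNReal.toReal_pos hvol_pos.ne' hvol_ne_top
    have hVb : (volume (ball (0 : EuclideanSpace ℝ (Fin d)) 1)).toReal = V := by
      rw [hV, Measure.addHaar_closedBall_eq_addHaar_ball]
    -- continuity facts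
    have hgrad_cont : Continuous (gradient f) := by
      refine LipschitzWith.continuous (K := Real.toNNReal L) ?_
      refine LipschitzWith.of_dist_le_mul fun a b => ?_
      rw [dist_eq_norm, dist_eq_norm, Real.coe_toNNReal L hL0]
      exact hL a b
    have hfd : ∀ y, fderiv ℝ f y = (toDual ℝ (EuclideanSpace ℝ (Fin d))) (gradient f y) := fun y =>
      ((toDual ℝ (EuclideanSpace ℝ (Fin d))).apply_symm_apply (fderiv ℝ f y)).symm
    have hfd_cont : Continuous (fun y => fderiv ℝ f y) := by
      simp only [hfd]
      exact (toDual ℝ (EuclideanSpace ℝ (Fin d))).continuous.comp hgrad_cont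
    -- smoothing is a scalar multiple of the set integral
    have havg : ballSmooth f β
        = fun y => V⁻¹ • ∫ u in closedBall (0 : EuclideanSpace ℝ (Fin d)) 1, f (y + β • u) ∂volume := by
      funext y
      rw [ballSmooth, setAverage_eq, measureReal_def]
    have h1 := deriv_under d f L β hβ hdiff hL0 hL x
    have h2 : HasFDerivAt (ballSmooth f β)
        (V⁻¹ • ∫ u in closedBall (0 : EuclideanSpace ℝ (Fin d)) 1, fderiv ℝ f (x + β • u) ∂volume) x := by
      rw [havg]
      exact h1.const_smul V⁻¹
    have hkey : ‖gradient (ballSmooth f β) x - gradient f x‖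
        = ‖(V⁻¹ • ∫ u in closedBall (0 : EuclideanSpace ℝ (Fin d)) 1, fderiv ℝ f (x + β • u) ∂volume)
            - fderiv ℝ f x‖ := by
      rw [gradient, gradient, h2.fderiv, ← LinearIsometryEquiv.map_sub,
        LinearIsometryEquiv.norm_map]
    have hint1 : IntegrableOn (fun u => fderiv ℝ f (x + β • u))
        (closedBall (0 : EuclideanSpace ℝ (Fin d)) 1) volume :=
      ((hfd_cont.comp (continuous_const.add (continuous_id.const_smul β))).continuousOn.integrableOn_compact
        (isCompact_closedBall _ _))
    have hint2 : IntegrableOn (fun _ : EuclideanSpace ℝ (Fin d) => fderiv ℝ f x)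
        (closedBall (0 : EuclideanSpace ℝ (Fin d)) 1) volume :=
      integrableOn_const (C := fderiv ℝ f x) measure_closedBall_lt_top.ne
    have heq2 : (V⁻¹ • ∫ u in closedBall (0 : EuclideanSpace ℝ (Fin d)) 1, fderiv ℝ f (x + β • u) ∂volume)
          - fderiv ℝ f x
        = V⁻¹ • ∫ u in closedBall (0 : EuclideanSpace ℝ (Fin d)) 1,
            (fderiv ℝ f (x + β • u) - fderiv ℝ f x) ∂volume := by
      rw [integral_sub hint1 hint2, setIntegral_const, measureReal_def, ← hV, smul_sub, smul_smul,
        inv_mul_cancel₀ hVpos.ne', one_smul]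
    have hbound : ‖∫ u in closedBall (0 : EuclideanSpace ℝ (Fin d)) 1,
          (fderiv ℝ f (x + β • u) - fderiv ℝ f x) ∂volume‖
        ≤ ∫ u in closedBall (0 : EuclideanSpace ℝ (Fin d)) 1, L * β * ‖u‖ ∂volume := by
      refine le_trans (norm_integral_le_integral_norm _) ?_
      refine setIntegral_mono_on ?_ ?_ measurableSet_closedBall ?_
      · exact (((hfd_cont.comp (continuous_const.add (continuous_id.const_smul β))).sub
          continuous_const).norm.continuousOn.integrableOn_compact (isCompact_closedBall _ _))
      · exact ((continuous_const.mul continuous_norm).continuousOn.integrableOn_compact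
          (isCompact_closedBall _ _))
      · intro u hu
        have heqn : ‖fderiv ℝ f (x + β • u) - fderiv ℝ f x‖
            = ‖gradient f (x + β • u) - gradient f x‖ := by
          rw [hfd (x + β • u), hfd x, ← LinearIsometryEquiv.map_sub,
            LinearIsometryEquiv.norm_map]
        rw [heqn]
        calc ‖gradient f (x + β • u) - gradient f x‖ ≤ L * ‖x + β • u - x‖ := hL _ _
          _ = L * β * ‖u‖ := by
              rw [add_sub_cancel_left, norm_smul, Real.norm_eq_abs, abs_of_pos hβ, mul_assoc]
    have hIval : ∫ u in closedBall (0 : EuclideanSpace ℝ (Fin d)) 1, L * β * ‖u‖ ∂volume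
        = L * β * ((d : ℝ) * V * (1 / (d + 1))) := by
      rw [integral_const_mul, radial_int d hd, hVb]
    have hfinal : ‖gradient (ballSmooth f β) x - gradient f x‖ ≤ L * β * d / 2 := by
      rw [hkey, heq2, norm_smul, Real.norm_eq_abs, abs_of_pos (inv_pos.mpr hVpos)]
      calc V⁻¹ * ‖∫ u in closedBall (0 : EuclideanSpace ℝ (Fin d)) 1,
              (fderiv ℝ f (x + β • u) - fderiv ℝ f x) ∂volume‖
          ≤ V⁻¹ * (L * β * ((d : ℝ) * V * (1 / (d + 1)))) := by
            rw [← hIval]; gcongr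
        _ = L * β * (d : ℝ) / (d + 1) := by
            field_simp
        _ ≤ L * β * d / 2 := by
            gcongr
            · linarith
    calc ‖gradient (ballSmooth f β) x - gradient f x‖ ^ 2 ≤ (L * β * d / 2) ^ 2 := by
          have := norm_nonneg (gradient (ballSmooth f β) x - gradient f x)
          nlinarith
      _ = L ^ 2 * d ^ 2 / 4 * β ^ 2 := by ring
end

section
/- Let f : ℝ^d → ℝ be differentiable with L-Lipschitz gradient, β > 0, and define the forward-difference coordinate gradient estimator g(x, β) := ∑_{j=1}^d (f(x + β e_j) − f(x))/β · e_j. Then for every x ∈ ℝ^d, ‖g(x, β) − ∇f(x)‖² ≤ (L² d / 4) β². -/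
open MeasureTheory

/-- Forward-difference coordinate gradient estimator. -/
noncomputable def fdGrad {d : ℕ} (f : EuclideanSpace ℝ (Fin d) → ℝ) (β : ℝ)
    (x : EuclideanSpace ℝ (Fin d)) : EuclideanSpace ℝ (Fin d) :=
  ∑ j : Fin d, ((f (x + β • EuclideanSpace.single j (1 : ℝ)) - f x) / β) •
    EuclideanSpace.single j (1 : ℝ)

lemma descent_aux (d : ℕ) (f : EuclideanSpace ℝ (Fin d) → ℝ) (L β : ℝ)
    (hβ : 0 < β) (hdiff : Differentiable ℝ f)
    (hL : ∀ x y, ‖gradient f x - gradient f y‖ ≤ L * ‖x - y‖)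
    (x : EuclideanSpace ℝ (Fin d)) (j : Fin d) :
    |f (x + β • EuclideanSpace.single j (1 : ℝ)) - f x
      - β * (gradient f x) j| ≤ L / 2 * β ^ 2 := by
  set e : EuclideanSpace ℝ (Fin d) := EuclideanSpace.single j (1 : ℝ) with he
  have hne : ‖e‖ = 1 := by simp [he]
  -- gradient is continuous
  have hlip : LipschitzWith L.toNNReal (gradient f) := by
    apply LipschitzWith.of_dist_le_mul
    intro a b
    rw [dist_eq_norm, dist_eq_norm]
    exact (hL a b).trans
      (mul_le_mul_of_nonneg_right (Real.le_coe_toNNReal L) (norm_nonneg _))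
  have hgc : Continuous (gradient f) := hlip.continuous
  -- derivative of t ↦ f (x + t • e)
  have hd : ∀ t : ℝ, HasDerivAt (fun t : ℝ => f (x + t • e))
      (inner ℝ (gradient f (x + t • e)) e : ℝ) t := by
    intro t
    have h1 : HasDerivAt (fun t : ℝ => x + t • e) e t := by
      simpa using ((hasDerivAt_id t).smul_const e).const_add x
    have h2 := (hdiff (x + t • e)).hasFDerivAt.comp_hasDerivAt t h1
    exact h2.congr_deriv (by simp)
  -- φ and its derivative
  have hφ : ∀ t : ℝ, HasDerivAt
      (fun t : ℝ => f (x + t • e) - t * (inner ℝ (gradient f x) e : ℝ))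
      ((inner ℝ (gradient f (x + t • e) - gradient f x) e : ℝ)) t := by
    intro t
    have := (hd t).sub ((hasDerivAt_id t).mul_const (inner ℝ (gradient f x) e : ℝ))
    exact this.congr_deriv (by rw [inner_sub_left, one_mul])
  have hcont : Continuous fun t : ℝ =>
      (inner ℝ (gradient f (x + t • e) - gradient f x) e : ℝ) := by
    apply Continuous.inner
    · exact (hgc.comp (by continuity)).sub continuous_const
    · exact continuous_const
  have hint := intervalIntegral.integral_eq_sub_of_hasDerivAt
      (f := fun t : ℝ => f (x + t • e) - t * (inner ℝ (gradient f x) e : ℝ))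
      (fun t _ => hφ t) (hcont.intervalIntegrable 0 β)
  have hbound : ‖∫ t in (0:ℝ)..β,
      (inner ℝ (gradient f (x + t • e) - gradient f x) e : ℝ)‖ ≤ L / 2 * β ^ 2 := by
    have h1 : ∀ t ∈ Set.Ioc (0:ℝ) β,
        ‖(inner ℝ (gradient f (x + t • e) - gradient f x) e : ℝ)‖ ≤ L * t := by
      intro t ht
      calc ‖(inner ℝ (gradient f (x + t • e) - gradient f x) e : ℝ)‖
          ≤ ‖gradient f (x + t • e) - gradient f x‖ * ‖e‖ := norm_inner_le_norm _ _
        _ = ‖gradient f (x + t • e) - gradient f x‖ := by rw [hne, mul_one]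
        _ ≤ L * ‖(x + t • e) - x‖ := hL _ _
        _ = L * t := by
            rw [add_sub_cancel_left, norm_smul, hne, mul_one,
              Real.norm_eq_abs, abs_of_pos ht.1]
    have hL0 : 0 ≤ L := by
      have h2 := (norm_nonneg _).trans (h1 β ⟨hβ, le_refl β⟩)
      exact nonneg_of_mul_nonneg_right (mul_comm L β ▸ h2) hβ
    calc ‖∫ t in (0:ℝ)..β,
        (inner ℝ (gradient f (x + t • e) - gradient f x) e : ℝ)‖
        ≤ |∫ t in (0:ℝ)..β, L * t| := by
          apply (intervalIntegral.norm_integral_le_of_norm_le hβ.le ?_ ?_).trans (le_abs_self _)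
          · exact Filter.Eventually.of_forall h1
          · exact (continuous_const.mul continuous_id).intervalIntegrable 0 β
      _ = L / 2 * β ^ 2 := by
          rw [intervalIntegral.integral_const_mul, integral_id, abs_of_nonneg (mul_nonneg hL0 (by nlinarith [sq_nonneg β]))]
          ring
  rw [hint] at hbound
  have hinner : (inner ℝ (gradient f x) e : ℝ) = (gradient f x) j := by
    rw [he, EuclideanSpace.inner_single_right]
    simp
  rw [Real.norm_eq_abs] at hbound
  simp only [zero_smul, add_zero, zero_mul, sub_zero] at hbound
  rw [← hinner]
  calc |f (x + β • e) - f x - β * (inner ℝ (gradient f x) e : ℝ)|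
      = |f (x + β • e) - β * (inner ℝ (gradient f x) e : ℝ) - f x| := by ring_nf
    _ ≤ L / 2 * β ^ 2 := hbound

theorem fdGrad_error (d : ℕ) (f : EuclideanSpace ℝ (Fin d) → ℝ) (L β : ℝ)
    (hβ : 0 < β) (hdiff : Differentiable ℝ f)
    (hL : ∀ x y, ‖gradient f x - gradient f y‖ ≤ L * ‖x - y‖)
    (x : EuclideanSpace ℝ (Fin d)) :
    ‖fdGrad f β x - gradient f x‖ ^ 2 ≤ L ^ 2 * d / 4 * β ^ 2 := by
  set v := fdGrad f β x - gradient f x with hv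
  have hvj : ∀ j : Fin d, |v j| ≤ L / 2 * β := by
    intro j
    have hcoord : v j = (f (x + β • EuclideanSpace.single j (1 : ℝ)) - f x) / β
        - (gradient f x) j := by
      simp only [hv, fdGrad]
      have : (∑ k : Fin d, ((f (x + β • EuclideanSpace.single k (1 : ℝ)) - f x) / β) •
          EuclideanSpace.single k (1 : ℝ)) j
          = (f (x + β • EuclideanSpace.single j (1 : ℝ)) - f x) / β := by
        rw [WithLp.ofLp_sum, Finset.sum_apply]
        rw [Finset.sum_eq_single j]
        · simp [EuclideanSpace.single_apply]
        · intro k _ hk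
          simp [EuclideanSpace.single_apply, Ne.symm hk]
        · simp
      simp [PiLp.sub_apply, this]
    have key := descent_aux d f L β hβ hdiff hL x j
    rw [hcoord]
    have : (f (x + β • EuclideanSpace.single j (1 : ℝ)) - f x) / β - (gradient f x) j
        = (f (x + β • EuclideanSpace.single j (1 : ℝ)) - f x - β * (gradient f x) j) / β := by
      field_simp
    rw [this, abs_div, abs_of_pos hβ, div_le_iff₀ hβ]
    calc |f (x + β • EuclideanSpace.single j (1 : ℝ)) - f x - β * (gradient f x) j|
        ≤ L / 2 * β ^ 2 := key
      _ = L / 2 * β * β := by ring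
  have hnorm : ‖v‖ ^ 2 = ∑ j : Fin d, |v j| ^ 2 := by
    rw [EuclideanSpace.norm_eq, Real.sq_sqrt]
    · simp [Real.norm_eq_abs]
    · positivity
  rw [hnorm]
  calc ∑ j : Fin d, |v j| ^ 2
      ≤ ∑ _j : Fin d, (L / 2 * β) ^ 2 :=
        Finset.sum_le_sum fun j _ => pow_le_pow_left₀ (abs_nonneg _) (hvj j) 2
    _ = d * (L / 2 * β) ^ 2 := by simp [Finset.sum_const]
    _ = L ^ 2 * d / 4 * β ^ 2 := by ring
end

section
/- Let f : ℝ^d → ℝ be L-smooth. For β > 0, 1 ≤ ℓ ≤ d, and an orthogonal matrix G ∈ O(d), define ĝ(x, G, β) := (d/ℓ) ∑_{j=1}^ℓ (f(x + β G e_j) − f(x))/β · G e_j. Then for any fixed x, y ∈ ℝ^d, taking expectation over G distributed according to the normalized Haar measure on O(d): E_G[‖ĝ(x, G, β) − ĝ(y, G, β)‖²] ≤ (3d/ℓ)‖∇f(x) − ∇f(y)‖² + (3 L² d² / (2ℓ)) β². -/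
open MeasureTheory
open scoped RealInnerProductSpace

noncomputable instance {d : ℕ} : MeasurableSpace (Matrix (Fin d) (Fin d) ℝ) :=
  inferInstanceAs (MeasurableSpace (Fin d → Fin d → ℝ))

/-- Action of a `d × d` matrix on a vector of `EuclideanSpace ℝ (Fin d)`. -/
noncomputable def matAct {d : ℕ} (A : Matrix (Fin d) (Fin d) ℝ)
    (x : EuclideanSpace ℝ (Fin d)) : EuclideanSpace ℝ (Fin d) :=
  (WithLp.equiv 2 (Fin d → ℝ)).symm (A.mulVec ((WithLp.equiv 2 (Fin d → ℝ)) x))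

/-- The structured `ℓ`-direction forward finite-difference gradient estimator
`ĝ(x, G, β) = (d/ℓ) ∑_{j=1}^ℓ (f(x + β G e_j) − f(x))/β · G e_j`. -/
noncomputable def structGrad {d l : ℕ} (hld : l ≤ d)
    (f : EuclideanSpace ℝ (Fin d) → ℝ) (β : ℝ)
    (x : EuclideanSpace ℝ (Fin d)) (G : Matrix (Fin d) (Fin d) ℝ) :
    EuclideanSpace ℝ (Fin d) :=
  ((d : ℝ) / l) • ∑ j : Fin l,
    ((f (x + β • matAct G (EuclideanSpace.single (Fin.castLE hld j) (1 : ℝ))) - f x) / β) •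
      matAct G (EuclideanSpace.single (Fin.castLE hld j) (1 : ℝ))





lemma matAct_single_apply {d : ℕ} (G : Matrix (Fin d) (Fin d) ℝ) (j i : Fin d) :
    matAct G (EuclideanSpace.single j (1:ℝ)) i = G i j := by
  simp [matAct, Matrix.mulVec, dotProduct, EuclideanSpace.single_apply,
    mul_ite, Finset.sum_ite_eq]

lemma inner_col {d : ℕ} {G : Matrix (Fin d) (Fin d) ℝ}
    (hG : G ∈ Matrix.orthogonalGroup (Fin d) ℝ) (j k : Fin d) :
    ⟪matAct G (EuclideanSpace.single j (1:ℝ)), matAct G (EuclideanSpace.single k (1:ℝ))⟫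
      = if j = k then 1 else 0 := by
  rw [Matrix.mem_orthogonalGroup_iff'] at hG
  have h1 : (star G * G) j k = (1 : Matrix (Fin d) (Fin d) ℝ) j k := by
    rw [Matrix.star_eq_conjTranspose, Matrix.conjTranspose_eq_transpose_of_trivial, hG]
  rw [Matrix.mul_apply, Matrix.one_apply] at h1
  rw [PiLp.inner_apply]
  simp only [matAct_single_apply, RCLike.inner_apply, conj_trivial]
  rw [← h1]
  exact Finset.sum_congr rfl fun i _ => by
    simp [Matrix.star_eq_conjTranspose, Matrix.conjTranspose_apply, mul_comm]

lemma inner_left_col {d : ℕ} (G : Matrix (Fin d) (Fin d) ℝ) (g : EuclideanSpace ℝ (Fin d))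
    (j : Fin d) :
    ⟪g, matAct G (EuclideanSpace.single j (1:ℝ))⟫ = ∑ i, g i * G i j := by
  rw [PiLp.inner_apply]
  simp [matAct_single_apply, mul_comm]

lemma norm_col {d : ℕ} {G : Matrix (Fin d) (Fin d) ℝ}
    (hG : G ∈ Matrix.orthogonalGroup (Fin d) ℝ) (j : Fin d) :
    ‖matAct G (EuclideanSpace.single j (1:ℝ))‖ = 1 := by
  have := inner_col hG j j
  rw [if_pos rfl, real_inner_self_eq_norm_sq] at this
  nlinarith [norm_nonneg (matAct G (EuclideanSpace.single j (1:ℝ)))]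


lemma descent {d : ℕ} (f : EuclideanSpace ℝ (Fin d) → ℝ) (L : ℝ) (hL0 : 0 ≤ L)
    (hdiff : Differentiable ℝ f)
    (hL : ∀ x y, ‖gradient f x - gradient f y‖ ≤ L * ‖x - y‖)
    (z u : EuclideanSpace ℝ (Fin d)) :
    |f (z + u) - f z - ⟪gradient f z, u⟫| ≤ L / 2 * ‖u‖ ^ 2 := by
  have hgc : Continuous (gradient f) := by
    have : LipschitzWith L.toNNReal (gradient f) := by
      apply LipschitzWith.of_dist_le_mul
      intro a b
      calc dist (gradient f a) (gradient f b) = ‖gradient f a - gradient f b‖ := by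
            rw [dist_eq_norm]
        _ ≤ L * ‖a - b‖ := hL a b
        _ ≤ L.toNNReal * dist a b := by
            rw [dist_eq_norm]
            exact mul_le_mul_of_nonneg_right (Real.le_coe_toNNReal L) (norm_nonneg _)
    exact this.continuous
  have hderiv : ∀ t : ℝ, HasDerivAt (fun t : ℝ => f (z + t • u))
      (⟪gradient f (z + t • u), u⟫) t := by
    intro t
    have h1 : HasDerivAt (fun t : ℝ => z + t • u) u t :=
      by simpa using ((hasDerivAt_id t).smul_const u).const_add z
    have h2 := ((hdiff (z + t • u)).hasGradientAt).hasFDerivAt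
    have := h2.comp_hasDerivAt t h1
    simpa [Function.comp_def] using this
  have hcont : Continuous fun t : ℝ => ⟪gradient f (z + t • u), u⟫ := by
    exact (hgc.comp (by continuity)).inner continuous_const
  have key : f (z + u) - f z = ∫ t in (0:ℝ)..1, ⟪gradient f (z + t • u), u⟫ := by
    have h := intervalIntegral.integral_eq_sub_of_hasDerivAt
      (f := fun t : ℝ => f (z + t • u)) (a := (0:ℝ)) (b := 1)
      (fun t _ => hderiv t) (hcont.intervalIntegrable 0 1)
    rw [h]
    norm_num
  have key2 : f (z + u) - f z - ⟪gradient f z, u⟫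
      = ∫ t in (0:ℝ)..1, ⟪gradient f (z + t • u) - gradient f z, u⟫ := by
    rw [key, show ⟪gradient f z, u⟫ = ∫ _t in (0:ℝ)..1, ⟪gradient f z, u⟫ by simp,
      ← intervalIntegral.integral_sub (hcont.intervalIntegrable 0 1)
      (intervalIntegrable_const)]
    congr 1
    ext t
    rw [inner_sub_left]
  have hbound : ∀ t ∈ Set.uIoc (0:ℝ) 1,
      ‖⟪gradient f (z + t • u) - gradient f z, u⟫‖ ≤ L * ‖u‖ ^ 2 * t := by
    intro t ht
    rw [Set.uIoc_of_le zero_le_one] at ht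
    calc ‖⟪gradient f (z + t • u) - gradient f z, u⟫‖
        ≤ ‖gradient f (z + t • u) - gradient f z‖ * ‖u‖ := norm_inner_le_norm _ _
      _ ≤ (L * ‖(z + t • u) - z‖) * ‖u‖ :=
          mul_le_mul_of_nonneg_right (hL _ _) (norm_nonneg _)
      _ = L * ‖u‖ ^ 2 * t := by
          simp only [add_sub_cancel_left, norm_smul, Real.norm_eq_abs,
            abs_of_pos ht.1]
          ring
  have := intervalIntegral.norm_integral_le_abs_of_norm_le
    (g := fun t => L * ‖u‖ ^ 2 * t)
    (μ := volume) (f := fun t => ⟪gradient f (z + t • u) - gradient f z, u⟫)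
    (a := 0) (b := 1)
    ((ae_restrict_mem measurableSet_uIoc).mono hbound)
    (by apply Continuous.intervalIntegrable; continuity)
  rw [key2, ← Real.norm_eq_abs]
  refine this.trans ?_
  rw [intervalIntegral.integral_const_mul, integral_id]
  rw [abs_of_nonneg (by positivity)]
  exact le_of_eq (by ring)


lemma normsq_sum_col {d l : ℕ} (hld : l ≤ d) {G : Matrix (Fin d) (Fin d) ℝ}
    (hG : G ∈ Matrix.orthogonalGroup (Fin d) ℝ) (c : Fin l → ℝ) :
    ‖∑ j : Fin l, c j • matAct G (EuclideanSpace.single (Fin.castLE hld j) (1:ℝ))‖ ^ 2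
      = ∑ j : Fin l, c j ^ 2 := by
  rw [← real_inner_self_eq_norm_sq, sum_inner]
  rw [Finset.sum_congr rfl fun j _ => inner_sum (𝕜 := ℝ) _ _ _]
  simp only [real_inner_smul_left, real_inner_smul_right]
  rw [Finset.sum_congr rfl fun j _ => Finset.sum_congr rfl
    fun k _ => by rw [inner_col hG]]
  simp [Fin.castLE_inj, mul_ite, Finset.sum_ite_eq', sq]

lemma structGrad_sub {d l : ℕ} (hld : l ≤ d)
    (f : EuclideanSpace ℝ (Fin d) → ℝ) (β : ℝ)
    (x y : EuclideanSpace ℝ (Fin d)) (G : Matrix (Fin d) (Fin d) ℝ) :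
    structGrad hld f β x G - structGrad hld f β y G
      = ((d : ℝ) / l) • ∑ j : Fin l,
        (((f (x + β • matAct G (EuclideanSpace.single (Fin.castLE hld j) (1 : ℝ))) - f x) / β)
        - ((f (y + β • matAct G (EuclideanSpace.single (Fin.castLE hld j) (1 : ℝ))) - f y) / β)) •
          matAct G (EuclideanSpace.single (Fin.castLE hld j) (1 : ℝ)) := by
  rw [structGrad, structGrad, ← smul_sub, ← Finset.sum_sub_distrib]
  congr 1
  exact Finset.sum_congr rfl fun j _ => (sub_smul _ _ _).symm

lemma coeff_bound {d : ℕ} (f : EuclideanSpace ℝ (Fin d) → ℝ) (L β : ℝ)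
    (hL0 : 0 ≤ L) (hβ : 0 < β)
    (hdiff : Differentiable ℝ f)
    (hL : ∀ x y, ‖gradient f x - gradient f y‖ ≤ L * ‖x - y‖)
    (x y v : EuclideanSpace ℝ (Fin d)) (hv : ‖v‖ = 1) :
    ((f (x + β • v) - f x) / β - (f (y + β • v) - f y) / β) ^ 2
      ≤ 3 * ⟪gradient f x - gradient f y, v⟫ ^ 2 + 3 / 2 * L ^ 2 * β ^ 2 := by
  have hnu : ‖β • v‖ ^ 2 = β ^ 2 := by
    rw [norm_smul, hv, mul_one, Real.norm_eq_abs, sq_abs]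
  have hx := descent f L hL0 hdiff hL x (β • v)
  have hy := descent f L hL0 hdiff hL y (β • v)
  rw [hnu] at hx hy
  set a := (f (x + β • v) - f x) / β - ⟪gradient f x, v⟫ with ha_def
  set b := (f (y + β • v) - f y) / β - ⟪gradient f y, v⟫ with hb_def
  have hxa : |a| ≤ L / 2 * β := by
    have : a = (f (x + β • v) - f x - ⟪gradient f x, β • v⟫) / β := by
      rw [real_inner_smul_right, ha_def]; field_simp
    rw [this, abs_div, abs_of_pos hβ, div_le_iff₀ hβ]
    calc |f (x + β • v) - f x - ⟪gradient f x, β • v⟫| ≤ L / 2 * β ^ 2 := hx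
      _ = L / 2 * β * β := by ring
  have hyb : |b| ≤ L / 2 * β := by
    have : b = (f (y + β • v) - f y - ⟪gradient f y, β • v⟫) / β := by
      rw [real_inner_smul_right, hb_def]; field_simp
    rw [this, abs_div, abs_of_pos hβ, div_le_iff₀ hβ]
    calc |f (y + β • v) - f y - ⟪gradient f y, β • v⟫| ≤ L / 2 * β ^ 2 := hy
      _ = L / 2 * β * β := by ring
  have key : (f (x + β • v) - f x) / β - (f (y + β • v) - f y) / β
      = ⟪gradient f x - gradient f y, v⟫ + a - b := by
    rw [inner_sub_left, ha_def, hb_def]; ring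
  rw [key]
  have ha2 : a ^ 2 ≤ (L / 2 * β) ^ 2 := by
    have := abs_le.mp hxa; nlinarith [this.1, this.2]
  have hb2 : b ^ 2 ≤ (L / 2 * β) ^ 2 := by
    have := abs_le.mp hyb; nlinarith [this.1, this.2]
  set p := ⟪gradient f x - gradient f y, v⟫ with hp
  have h3 : (p + a - b) ^ 2 ≤ 3 * p ^ 2 + 3 * a ^ 2 + 3 * b ^ 2 := by
    nlinarith [sq_nonneg (p - a), sq_nonneg (p + b), sq_nonneg (a + b)]
  calc (p + a - b) ^ 2 ≤ 3 * p ^ 2 + 3 * a ^ 2 + 3 * b ^ 2 := h3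
    _ ≤ 3 * p ^ 2 + 3 * (L / 2 * β) ^ 2 + 3 * (L / 2 * β) ^ 2 := by linarith
    _ = 3 * p ^ 2 + 3 / 2 * L ^ 2 * β ^ 2 := by ring

variable {d : ℕ}

abbrev OG (d : ℕ) := Matrix.orthogonalGroup (Fin d) ℝ

lemma perm_mem_orth (σ : Equiv.Perm (Fin d)) :
    (σ.permMatrix ℝ) ∈ Matrix.orthogonalGroup (Fin d) ℝ := by
  rw [Matrix.mem_orthogonalGroup_iff']
  have hstar : star (σ.permMatrix ℝ) = (σ.symm.toPEquiv.toMatrix : Matrix (Fin d) (Fin d) ℝ) := by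
    rw [Matrix.star_eq_conjTranspose, Equiv.toPEquiv_symm, PEquiv.toMatrix_symm]
    ext a b
    simp [Matrix.conjTranspose_apply, Matrix.transpose_apply]
  rw [← Matrix.conjTranspose_eq_transpose_of_trivial, ← Matrix.star_eq_conjTranspose,
    hstar, Equiv.Perm.permMatrix, ← PEquiv.toMatrix_trans, ← Equiv.toPEquiv_trans]
  simp [Equiv.toPEquiv_refl]

lemma sign_mem_orth (i : Fin d) :
    (Matrix.diagonal (fun a => if a = i then (-1:ℝ) else 1)) ∈
      Matrix.orthogonalGroup (Fin d) ℝ := by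
  rw [Matrix.mem_orthogonalGroup_iff']
  have hstar : star (Matrix.diagonal (fun a => if a = i then (-1:ℝ) else 1))
      = Matrix.diagonal (fun a => if a = i then (-1:ℝ) else 1) := by
    rw [Matrix.star_eq_conjTranspose, Matrix.diagonal_conjTranspose]
    simp
  rw [← Matrix.conjTranspose_eq_transpose_of_trivial, ← Matrix.star_eq_conjTranspose,
    hstar, Matrix.diagonal_mul_diagonal]
  ext a b
  by_cases h : a = i <;> simp [Matrix.diagonal_apply, Matrix.one_apply, h]


lemma measurable_entry (i j : Fin d) :
    Measurable (fun G : OG d => (G : Matrix (Fin d) (Fin d) ℝ) i j) :=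
  (measurable_pi_apply j).comp ((measurable_pi_apply i).comp measurable_subtype_coe)

lemma entry_abs_le_one (G : OG d) (i j : Fin d) :
    |(G : Matrix (Fin d) (Fin d) ℝ) i j| ≤ 1 := by
  have hG := G.2
  rw [Matrix.mem_orthogonalGroup_iff'] at hG
  have h1 : (star (G : Matrix (Fin d) (Fin d) ℝ) * G) j j = 1 := by
    rw [Matrix.star_eq_conjTranspose, Matrix.conjTranspose_eq_transpose_of_trivial, hG]; simp
  rw [Matrix.mul_apply] at h1
  have h2 : ∑ a, ((G : Matrix (Fin d) (Fin d) ℝ) a j) ^ 2 = 1 := by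
    rw [← h1]
    exact Finset.sum_congr rfl fun a _ => by
      simp [Matrix.star_eq_conjTranspose, Matrix.conjTranspose_apply, sq]
  have h3 : ((G : Matrix (Fin d) (Fin d) ℝ) i j) ^ 2 ≤ 1 := by
    rw [← h2]
    exact Finset.single_le_sum (f := fun a => ((G : Matrix (Fin d) (Fin d) ℝ) a j) ^ 2)
      (fun a _ => sq_nonneg _) (Finset.mem_univ i)
  exact abs_le.mpr ⟨by nlinarith, by nlinarith⟩

lemma measurable_mul_left (h : OG d) : Measurable (fun x : OG d => h * x) := by
  apply Measurable.subtype_mk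
  apply measurable_pi_lambda
  intro a
  apply measurable_pi_lambda
  intro b
  simp only [Matrix.mul_apply]
  exact Finset.measurable_sum _ fun c _ => (measurable_entry c b).const_mul _

lemma integrable_entry_mul (μ : Measure (OG d)) [IsProbabilityMeasure μ]
    (i k j : Fin d) :
    Integrable (fun G : OG d => (G : Matrix (Fin d) (Fin d) ℝ) i j
      * (G : Matrix (Fin d) (Fin d) ℝ) k j) μ := by
  refine ⟨((measurable_entry i j).mul (measurable_entry k j)).aestronglyMeasurable, ?_⟩
  apply HasFiniteIntegral.of_bounded (C := 1)
  filter_upwards with G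
  rw [Real.norm_eq_abs, abs_mul]
  exact mul_le_one₀ (entry_abs_le_one G i j) (abs_nonneg _) (entry_abs_le_one G k j)

lemma integral_shift (μ : Measure (OG d)) [IsProbabilityMeasure μ]
    (hμinv : ∀ g : OG d, Measure.map (fun x => g * x) μ = μ)
    (F : OG d → ℝ) (hF : AEStronglyMeasurable F μ) (h : OG d) :
    ∫ G, F G ∂μ = ∫ G, F (h * G) ∂μ := by
  conv_lhs => rw [← hμinv h]
  rw [integral_map (measurable_mul_left h).aemeasurable]
  rw [hμinv h]
  exact hF

lemma moment_offdiag (μ : Measure (OG d)) [IsProbabilityMeasure μ]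
    (hμinv : ∀ g : OG d, Measure.map (fun x => g * x) μ = μ)
    (i k j : Fin d) (hik : i ≠ k) :
    ∫ G, (G : Matrix (Fin d) (Fin d) ℝ) i j * (G : Matrix (Fin d) (Fin d) ℝ) k j ∂μ = 0 := by
  set h : OG d := ⟨Matrix.diagonal (fun a => if a = i then (-1:ℝ) else 1), sign_mem_orth i⟩
  have key := integral_shift μ hμinv _
    (integrable_entry_mul μ i k j).aestronglyMeasurable h
  have heval : ∀ G : OG d,
      ((h * G : OG d) : Matrix (Fin d) (Fin d) ℝ) i j
        * ((h * G : OG d) : Matrix (Fin d) (Fin d) ℝ) k j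
      = - ((G : Matrix (Fin d) (Fin d) ℝ) i j * (G : Matrix (Fin d) (Fin d) ℝ) k j) := by
    intro G
    rw [Submonoid.coe_mul]
    have hh : (h : Matrix (Fin d) (Fin d) ℝ)
        = Matrix.diagonal (fun a => if a = i then (-1:ℝ) else 1) := rfl
    rw [hh, Matrix.diagonal_mul, Matrix.diagonal_mul]
    simp [hik.symm]
  have key2 : ∫ G, ((h * G : OG d) : Matrix (Fin d) (Fin d) ℝ) i j
      * ((h * G : OG d) : Matrix (Fin d) (Fin d) ℝ) k j ∂μ
      = - ∫ G, (G : Matrix (Fin d) (Fin d) ℝ) i j * (G : Matrix (Fin d) (Fin d) ℝ) k j ∂μ := by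
    rw [← integral_neg]
    exact integral_congr_ae (Filter.Eventually.of_forall heval)
  rw [key2] at key
  linarith


lemma col_sq_sum (G : OG d) (j : Fin d) :
    ∑ a, ((G : Matrix (Fin d) (Fin d) ℝ) a j) ^ 2 = 1 := by
  have hG := G.2
  rw [Matrix.mem_orthogonalGroup_iff'] at hG
  have h1 : (star (G : Matrix (Fin d) (Fin d) ℝ) * G) j j = 1 := by
    rw [Matrix.star_eq_conjTranspose, Matrix.conjTranspose_eq_transpose_of_trivial, hG]; simp
  rw [Matrix.mul_apply] at h1
  rw [← h1]
  exact Finset.sum_congr rfl fun a _ => by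
    simp [Matrix.star_eq_conjTranspose, Matrix.conjTranspose_apply, sq]

lemma moment_diag (μ : Measure (OG d)) [IsProbabilityMeasure μ]
    (hμinv : ∀ g : OG d, Measure.map (fun x => g * x) μ = μ)
    (i j : Fin d) :
    ∫ G, (G : Matrix (Fin d) (Fin d) ℝ) i j * (G : Matrix (Fin d) (Fin d) ℝ) i j ∂μ
      = 1 / d := by
  have hall : ∀ k : Fin d,
      ∫ G, (G : Matrix (Fin d) (Fin d) ℝ) i j * (G : Matrix (Fin d) (Fin d) ℝ) i j ∂μ
      = ∫ G, (G : Matrix (Fin d) (Fin d) ℝ) k j * (G : Matrix (Fin d) (Fin d) ℝ) k j ∂μ := by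
    intro k
    set σ : Equiv.Perm (Fin d) := Equiv.swap i k
    set h : OG d := ⟨σ.permMatrix ℝ, perm_mem_orth σ⟩
    have key := integral_shift μ hμinv _
      (integrable_entry_mul μ i i j).aestronglyMeasurable h
    rw [key]
    apply integral_congr_ae
    filter_upwards with G
    rw [Submonoid.coe_mul]
    have hh : (h : Matrix (Fin d) (Fin d) ℝ) = σ.toPEquiv.toMatrix := rfl
    rw [hh, PEquiv.toMatrix_toPEquiv_mul]
    simp [σ, Equiv.swap_apply_left]
  have hsum : ∑ k : Fin d,
      (∫ G, (G : Matrix (Fin d) (Fin d) ℝ) k j * (G : Matrix (Fin d) (Fin d) ℝ) k j ∂μ)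
      = 1 := by
    rw [← integral_finset_sum _ (fun k _ => integrable_entry_mul μ k k j)]
    have : ∀ G : OG d, ∑ k : Fin d, (G : Matrix (Fin d) (Fin d) ℝ) k j
        * (G : Matrix (Fin d) (Fin d) ℝ) k j = 1 := by
      intro G
      rw [← col_sq_sum G j]
      exact Finset.sum_congr rfl fun a _ => (sq _).symm
    rw [integral_congr_ae (Filter.Eventually.of_forall this)]
    simp
  have hd : 0 < d := i.pos
  have : (d : ℝ) * ∫ G, (G : Matrix (Fin d) (Fin d) ℝ) i j
      * (G : Matrix (Fin d) (Fin d) ℝ) i j ∂μ = 1 := by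
    rw [← hsum, Finset.sum_congr rfl (fun k _ => (hall k).symm), Finset.sum_const]
    simp [mul_comm]
  field_simp at this ⊢
  linarith

lemma moment_inner (μ : Measure (OG d)) [IsProbabilityMeasure μ]
    (hμinv : ∀ g : OG d, Measure.map (fun x => g * x) μ = μ)
    (g : EuclideanSpace ℝ (Fin d)) (j : Fin d) :
    ∫ G : OG d, (∑ i, g i * (G : Matrix (Fin d) (Fin d) ℝ) i j) ^ 2 ∂μ
      = ‖g‖ ^ 2 / d := by
  have hpt : ∀ G : OG d, (∑ i, g i * (G : Matrix (Fin d) (Fin d) ℝ) i j) ^ 2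
      = ∑ i, ∑ k, (g i * g k) *
        ((G : Matrix (Fin d) (Fin d) ℝ) i j * (G : Matrix (Fin d) (Fin d) ℝ) k j) := by
    intro G
    rw [sq, Finset.sum_mul_sum]
    exact Finset.sum_congr rfl fun i _ => Finset.sum_congr rfl fun k _ => by ring
  rw [integral_congr_ae (Filter.Eventually.of_forall hpt)]
  rw [integral_finset_sum _ (fun i _ => integrable_finset_sum _
    (fun k _ => (integrable_entry_mul μ i k j).const_mul _))]
  rw [Finset.sum_congr rfl (fun i _ => integral_finset_sum _
    (fun k _ => (integrable_entry_mul μ i k j).const_mul _))]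
  rw [Finset.sum_congr rfl (fun i (_ : i ∈ Finset.univ) => Finset.sum_congr rfl
    (fun k (_ : k ∈ Finset.univ) => integral_const_mul _ _))]
  have hsplit : ∀ i : Fin d, ∑ k, (g i * g k) *
      (∫ G, (G : Matrix (Fin d) (Fin d) ℝ) i j * (G : Matrix (Fin d) (Fin d) ℝ) k j ∂μ)
      = g i * g i * (1 / d) := by
    intro i
    rw [Finset.sum_eq_single i]
    · rw [moment_diag μ hμinv i j]
    · intro k _ hk
      rw [moment_offdiag μ hμinv i k j (Ne.symm hk)]
      ring
    · intro h; exact absurd (Finset.mem_univ i) h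
  rw [Finset.sum_congr rfl fun i _ => hsplit i]
  have hnorm : ‖g‖ ^ 2 = ∑ i, g i * g i := by
    rw [← real_inner_self_eq_norm_sq, PiLp.inner_apply]
    simp [sq]
  rw [hnorm, Finset.sum_div]
  exact Finset.sum_congr rfl fun i _ => by ring


theorem structGrad_diff_bound (d l : ℕ) (hl : 1 ≤ l) (hld : l ≤ d)
    (μ : Measure (Matrix.orthogonalGroup (Fin d) ℝ)) [IsProbabilityMeasure μ]
    (hμinv : ∀ g : Matrix.orthogonalGroup (Fin d) ℝ,
      Measure.map (fun x => g * x) μ = μ)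
    (f : EuclideanSpace ℝ (Fin d) → ℝ) (L β : ℝ) (hβ : 0 < β)
    (hdiff : Differentiable ℝ f)
    (hL : ∀ x y, ‖gradient f x - gradient f y‖ ≤ L * ‖x - y‖)
    (x y : EuclideanSpace ℝ (Fin d)) :
    ∫ G, ‖structGrad hld f β x (G : Matrix (Fin d) (Fin d) ℝ)
        - structGrad hld f β y (G : Matrix (Fin d) (Fin d) ℝ)‖ ^ 2 ∂μ
      ≤ 3 * d / l * ‖gradient f x - gradient f y‖ ^ 2
        + 3 * L ^ 2 * d ^ 2 / (2 * l) * β ^ 2 := by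
  have hd : 0 < d := lt_of_lt_of_le hl hld
  have hL0 : 0 ≤ L := by
    have h1 := hL 0 (EuclideanSpace.single ⟨0, hd⟩ (1:ℝ))
    rw [zero_sub, norm_neg, EuclideanSpace.norm_single] at h1
    have := (norm_nonneg (gradient f 0 - gradient f (EuclideanSpace.single ⟨0, hd⟩ (1:ℝ)))).trans h1
    simpa using this
  set g := gradient f x - gradient f y with hg
  set q : Fin l → OG d → ℝ := fun j G =>
    (∑ i, g i * (G : Matrix (Fin d) (Fin d) ℝ) i (Fin.castLE hld j)) ^ 2 with hq
  set B : OG d → ℝ := fun G => ((d : ℝ) / l) ^ 2 *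
    ∑ j : Fin l, (3 * q j G + 3 / 2 * L ^ 2 * β ^ 2) with hB
  -- integrability of q j
  have hqint : ∀ j : Fin l, Integrable (q j) μ := by
    intro j
    have hpt : ∀ G : OG d, (∑ i, ∑ k, (g i * g k) *
        ((G : Matrix (Fin d) (Fin d) ℝ) i (Fin.castLE hld j)
          * (G : Matrix (Fin d) (Fin d) ℝ) k (Fin.castLE hld j))) = q j G := by
      intro G
      rw [hq]
      simp only
      rw [sq, Finset.sum_mul_sum]
      exact Finset.sum_congr rfl fun i _ => Finset.sum_congr rfl fun k _ => by ring
    exact (integrable_finset_sum _ (fun i _ => integrable_finset_sum _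
      (fun k _ => (integrable_entry_mul μ i k (Fin.castLE hld j)).const_mul _))).congr
      (Filter.Eventually.of_forall hpt)
  have hBint : Integrable B μ := by
    apply Integrable.const_mul
    apply integrable_finset_sum
    intro j _
    exact ((hqint j).const_mul 3).add (integrable_const _)
  -- pointwise bound
  have hpointwise : ∀ G : OG d,
      ‖structGrad hld f β x (G : Matrix (Fin d) (Fin d) ℝ)
        - structGrad hld f β y (G : Matrix (Fin d) (Fin d) ℝ)‖ ^ 2 ≤ B G := by
    intro G
    rw [structGrad_sub, norm_smul]
    rw [mul_pow, Real.norm_eq_abs, sq_abs]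
    rw [normsq_sum_col hld G.2]
    rw [hB]
    simp only
    apply mul_le_mul_of_nonneg_left _ (by positivity)
    apply Finset.sum_le_sum
    intro j _
    have hv := norm_col G.2 (Fin.castLE hld j)
    have hcb := coeff_bound f L β hL0 hβ hdiff hL x y
      (matAct (G : Matrix (Fin d) (Fin d) ℝ) (EuclideanSpace.single (Fin.castLE hld j) (1:ℝ))) hv
    rw [inner_left_col] at hcb
    exact hcb
  -- conclude
  have hmain : ∫ G, ‖structGrad hld f β x (G : Matrix (Fin d) (Fin d) ℝ)
        - structGrad hld f β y (G : Matrix (Fin d) (Fin d) ℝ)‖ ^ 2 ∂μ ≤ ∫ G, B G ∂μ := by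
    apply integral_mono_of_nonneg
    · filter_upwards with G; positivity
    · exact hBint
    · filter_upwards with G; exact hpointwise G
  refine hmain.trans ?_
  have hBval : ∫ G, B G ∂μ = ((d : ℝ) / l) ^ 2 *
      ∑ j : Fin l, (3 * (‖g‖ ^ 2 / d) + 3 / 2 * L ^ 2 * β ^ 2) := by
    rw [hB]
    simp only
    rw [integral_const_mul]
    congr 1
    have hfs := integral_finset_sum (μ := μ) Finset.univ
      (f := fun (j : Fin l) (G : OG d) => 3 * q j G + 3 / 2 * L ^ 2 * β ^ 2)
      (fun j _ => ((hqint j).const_mul 3).add (integrable_const _))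
    rw [hfs]
    refine Finset.sum_congr rfl fun j _ => ?_
    rw [integral_add ((hqint j).const_mul 3) (integrable_const _), integral_const_mul,
      moment_inner μ hμinv g (Fin.castLE hld j), integral_const]
    simp
  rw [hBval, Finset.sum_const, Finset.card_univ, Fintype.card_fin, nsmul_eq_mul]
  have hdne : (d : ℝ) ≠ 0 := Nat.cast_ne_zero.mpr hd.ne'
  have hlne : (l : ℝ) ≠ 0 := Nat.cast_ne_zero.mpr (lt_of_lt_of_le one_pos hl).ne'
  have harith : ((d : ℝ) / l) ^ 2 * ((l : ℝ) * (3 * (‖g‖ ^ 2 / d) + 3 / 2 * L ^ 2 * β ^ 2))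
      = 3 * d / l * ‖g‖ ^ 2 + 3 * L ^ 2 * d ^ 2 / (2 * l) * β ^ 2 := by
    field_simp
  rw [harith, hg]
end
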